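/- For every z ∈ ℂ with |z| < 1, one has (1 + z)² · Log(1 + z) = z + (3/2)·z² + 2·∑_{k=3}^{∞} (−1)^{k−1} · ((k−3)!/k!) · z^k, where Log denotes the principal branch of the complex logarithm, and the series on the right converges for |z| < 1. -/

import Mathlib

/-- For `|z| < 1`,
`(1+z)² Log(1+z) = z + (3/2) z² + 2 ∑_{k=3}^∞ (-1)^{k-1} ((k-3)!/k!) z^k`,
where the series converges; here stated via `HasSum` for the series indexed by
`k = j + 3`, `j ∈ ℕ`. -/
theorem sq_mul_log_one_add_series (z : ℂ) (hz : ‖z‖ < 1) :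
    HasSum
      (fun j : ℕ => 2 * (-1 : ℂ) ^ (j + 3 - 1) *
        ((Nat.factorial (j + 3 - 3) : ℂ) / (Nat.factorial (j + 3))) * z ^ (j + 3))
      ((1 + z) ^ 2 * Complex.log (1 + z) - (z + (3 / 2) * z ^ 2)) := by
  set a : ℕ → ℂ := fun n => (-1 : ℂ) ^ (n + 1) * z ^ n / n with ha
  have h0 : HasSum a (Complex.log (1 + z)) :=
    Complex.hasSum_taylorSeries_log (by simpa using hz)
  set L := Complex.log (1 + z)
  have H1 : HasSum (fun j : ℕ => a (j + 3)) (L - ∑ i ∈ Finset.range 3, a i) :=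
    (hasSum_nat_add_iff' 3).2 h0
  have H2 : HasSum (fun j : ℕ => 2 * z * a (j + 2))
      (2 * z * L - ∑ i ∈ Finset.range 2, 2 * z * a i) :=
    (hasSum_nat_add_iff' 2).2 (h0.mul_left (2 * z))
  have H3 : HasSum (fun j : ℕ => z ^ 2 * a (j + 1))
      (z ^ 2 * L - ∑ i ∈ Finset.range 1, z ^ 2 * a i) :=
    (hasSum_nat_add_iff' 1).2 (h0.mul_left (z ^ 2))
  have H := (H1.add H2).add H3
  have hsum : (L - ∑ i ∈ Finset.range 3, a i) +
      (2 * z * L - ∑ i ∈ Finset.range 2, 2 * z * a i) +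
      (z ^ 2 * L - ∑ i ∈ Finset.range 1, z ^ 2 * a i) =
      (1 + z) ^ 2 * L - (z + (3 / 2) * z ^ 2) := by
    simp only [ha, Finset.sum_range_succ, Finset.sum_range_zero, Nat.cast_zero, div_zero,
      Nat.cast_one, Nat.cast_ofNat, pow_zero, pow_one]
    ring
  rw [hsum] at H
  refine H.congr_fun fun j => ?_
  simp only [ha]
  have e3 : ((j : ℕ) + 3 : ℕ).factorial = (j + 3) * ((j + 2) * ((j + 1) * j.factorial)) := by
    rw [show j + 3 = (j + 2) + 1 from rfl, Nat.factorial_succ,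
      show j + 2 = (j + 1) + 1 from rfl, Nat.factorial_succ, Nat.factorial_succ]
  have hj1 : ((j : ℂ) + 1) ≠ 0 := by exact_mod_cast (by omega : j + 1 ≠ 0)
  have hj2 : ((j : ℂ) + 2) ≠ 0 := by exact_mod_cast (by omega : j + 2 ≠ 0)
  have hj3 : ((j : ℂ) + 3) ≠ 0 := by exact_mod_cast (by omega : j + 3 ≠ 0)
  have hf : ((j.factorial : ℂ)) ≠ 0 := Nat.cast_ne_zero.mpr j.factorial_ne_zero
  simp only [show j + 3 - 1 = j + 2 from rfl, show j + 3 - 3 = j from rfl, e3]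
  push_cast
  field_simp
  ring
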